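/- Let (V̄, q̄) be a nondegenerate quadratic space over an algebraically closed field of characteristic zero with dim V̄ ≥ 4, and let N ∈ 𝔰𝔬(V̄, q̄) satisfy N ≠ 0, N² = 0, and dim(im N) = 2. Then there exists a basis of V̄ in which q̄ takes the standard hyperbolic form (with Gram matrix having identity off-diagonal blocks, and an extra 1 on the diagonal if dim V̄ is odd) and N sends the basis element e_1 to e_2' , e_2 to −e_1', and kills all other basis vectors (here e_i, e_i' are the hyperbolic basis pairs). -/

import Mathlib

open Module

theorem exists_orthonormal_basis
    {K : Type*} [Field K] [IsAlgClosed K] [CharZero K]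
    {V : Type*} [AddCommGroup V] [Module K V] [FiniteDimensional K V]
    (B : LinearMap.BilinForm K V) (hBsymm : B.IsSymm) (hBnd : B.Nondegenerate) :
    ∃ v : Basis (Fin (finrank K V)) K V,
      ∀ i j, B (v i) (v j) = if i = j then 1 else 0 := by
  obtain ⟨v, hv⟩ := LinearMap.BilinForm.exists_orthogonal_basis (LinearMap.BilinForm.isSymm_iff.1 hBsymm)
  have hdiag : ∀ i, B (v i) (v i) ≠ 0 := by
    intro i h0
    refine v.ne_zero i (hBnd.1 _ fun y => ?_)
    rw [← v.sum_repr y, map_sum]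
    refine Finset.sum_eq_zero fun j _ => ?_
    rw [map_smul, smul_eq_mul]
    rcases eq_or_ne i j with rfl | hij
    · rw [h0, mul_zero]
    · rw [hv hij, mul_zero]
  choose s hs using fun i => IsAlgClosed.exists_pow_nat_eq (B (v i) (v i)) (n := 2) (by norm_num)
  have hsne : ∀ i, s i ≠ 0 := fun i h => hdiag i (by rw [← hs i, h]; ring)
  refine ⟨v.unitsSMul (fun i => (Units.mk0 (s i) (hsne i))⁻¹), fun i j => ?_⟩
  rw [Basis.unitsSMul_apply, Basis.unitsSMul_apply, Units.smul_def, Units.smul_def,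
    LinearMap.map_smul₂, map_smul]
  simp only [smul_eq_mul, Units.val_inv_eq_inv_val, Units.val_mk0]
  rcases eq_or_ne i j with rfl | hij
  · rw [if_pos rfl]
    rw [← hs i, sq, inv_mul_cancel_left₀ (hsne i), inv_mul_cancel₀ (hsne i)]
  · rw [if_neg hij, hv hij, mul_zero, mul_zero]


theorem linIndep_of_dual_pairing {K V ι : Type*} [Field K] [AddCommGroup V] [Module K V]
    [Fintype ι] [DecidableEq ι]
    (B : LinearMap.BilinForm K V) (v : ι → V) (d : ι → ι)
    (h : ∀ i j, B (v i) (v (d j)) = if i = j then 1 else 0) :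
    LinearIndependent K v := by
  rw [Fintype.linearIndependent_iff]
  intro g hg i
  have h2 : B (∑ j, g j • v j) (v (d i)) = 0 := by rw [hg, map_zero, LinearMap.zero_apply]
  rw [map_sum, LinearMap.sum_apply] at h2
  simp only [map_smul, LinearMap.smul_apply, smul_eq_mul, h] at h2
  simpa using h2

theorem span_restrict_nondeg {K V ι : Type*} [Field K] [AddCommGroup V] [Module K V]
    [Fintype ι] [DecidableEq ι]
    (B : LinearMap.BilinForm K V) (v : ι → V) (d : ι → ι)
    (h : ∀ i j, B (v i) (v (d j)) = if i = j then 1 else 0) :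
    (B.restrict (Submodule.span K (Set.range v))).Nondegenerate := by
  refine ⟨fun x hx => ?_, fun x hx => ?_⟩
  swap
  · have hdinj : Function.Injective d := fun a a' e => by
      have h1 := h a a
      have h2 := h a a'
      rw [e] at h1
      by_contra hne
      rw [if_neg hne] at h2
      rw [if_pos rfl, h2] at h1
      exact zero_ne_one h1
    have hbij : Function.Bijective d := hdinj.bijective_of_finite
    obtain ⟨c, hc⟩ := Submodule.mem_span_range_iff_exists_fun K |>.1 x.2
    have hxV : ∀ i, B (v i) (x : V) = 0 := fun i =>
      hx ⟨v i, Submodule.subset_span (Set.mem_range_self i)⟩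
    have hs : (∑ k, c k • v k) = ∑ k, c (d k) • v (d k) :=
      (Equiv.sum_comp (Equiv.ofBijective d hbij) (fun k => c k • v k)).symm
    have hc0 : ∀ i, c (d i) = 0 := by
      intro i
      have := hxV i
      rw [← hc, hs, map_sum] at this
      simp only [map_smul, smul_eq_mul, h] at this
      simpa using this
    have hc0' : ∀ j, c j = 0 := fun j => by
      obtain ⟨i, rfl⟩ := hbij.2 j
      exact hc0 i
    have : (x : V) = 0 := by rw [← hc]; simp [hc0']
    exact Subtype.ext this
  have hxV : ∀ j, B (x : V) (v j) = 0 := fun j =>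
    hx ⟨v j, Submodule.subset_span (Set.mem_range_self j)⟩
  obtain ⟨c, hc⟩ := Submodule.mem_span_range_iff_exists_fun K |>.1 x.2
  have hc0 : ∀ i, c i = 0 := by
    intro i
    have := hxV (d i)
    rw [← hc, map_sum, LinearMap.sum_apply] at this
    simp only [map_smul, LinearMap.smul_apply, smul_eq_mul, h] at this
    simpa using this
  have : (x : V) = 0 := by rw [← hc]; simp [hc0]
  exact Subtype.ext this



set_option maxHeartbeats 2000000 in
/-- Normal form for a Type II log monodromy operator.  Let `(V, B)` be a nondegenerate
symmetric bilinear space over an algebraically closed field of characteristic zero with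
`dim V ≥ 4`, and let `N ∈ 𝔰𝔬(V, B)` (i.e. `B(Nx,y) + B(x,Ny) = 0`) satisfy `N ≠ 0`,
`N² = 0` and `dim(im N) = 2`.  Then there is a basis
`e_1, …, e_r, e_1', …, e_r' (, f)` of `V` (with `dim V = 2r + c`, `c ≤ 1`, `r ≥ 2`;
the extra vector `f` present exactly when `dim V` is odd) in which `B` takes the standard
hyperbolic form `B(e_i, e_j') = δ_{ij}`, `B(e_i,e_j) = B(e_i',e_j') = 0`,
`B(f,f) = 1`, `B(f, e_i) = B(f, e_i') = 0`, and
`N e_1 = e_2'`, `N e_2 = −e_1'`, and `N` kills all other basis vectors. -/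
theorem typeII_monodromy_normal_form
    {K : Type*} [Field K] [IsAlgClosed K] [CharZero K]
    {V : Type*} [AddCommGroup V] [Module K V] [FiniteDimensional K V]
    (B : LinearMap.BilinForm K V) (hBsymm : ∀ x y, B x y = B y x)
    (hBnd : B.Nondegenerate)
    (hdim : 4 ≤ Module.finrank K V)
    (N : Module.End K V)
    (hso : ∀ x y, B (N x) y + B x (N y) = 0)
    (hN0 : N ≠ 0) (hN2 : N ^ 2 = 0)
    (hrk : Module.finrank K (LinearMap.range N) = 2) :
    ∃ (r c : ℕ), ∃ _hr : 2 ≤ r, c ≤ 1 ∧ Module.finrank K V = 2 * r + c ∧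
      ∃ b : Basis (Fin r ⊕ Fin r ⊕ Fin c) K V,
        -- Gram matrix: hyperbolic pairs `e_i = b (inl i)`, `e_i' = b (inr (inl i))`,
        -- plus an extra orthonormal vector `f = b (inr (inr k))` when `dim V` is odd
        (∀ i j : Fin r, B (b (Sum.inl i)) (b (Sum.inr (Sum.inl j))) = if i = j then 1 else 0) ∧
        (∀ i j : Fin r, B (b (Sum.inl i)) (b (Sum.inl j)) = 0) ∧
        (∀ i j : Fin r, B (b (Sum.inr (Sum.inl i))) (b (Sum.inr (Sum.inl j))) = 0) ∧
        (∀ k : Fin c, B (b (Sum.inr (Sum.inr k))) (b (Sum.inr (Sum.inr k))) = 1) ∧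
        (∀ (k : Fin c) (i : Fin r), B (b (Sum.inr (Sum.inr k))) (b (Sum.inl i)) = 0) ∧
        (∀ (k : Fin c) (i : Fin r),
          B (b (Sum.inr (Sum.inr k))) (b (Sum.inr (Sum.inl i))) = 0) ∧
        -- the action of `N`
        N (b (Sum.inl ⟨0, by omega⟩)) = b (Sum.inr (Sum.inl ⟨1, by omega⟩)) ∧
        N (b (Sum.inl ⟨1, by omega⟩)) = - b (Sum.inr (Sum.inl ⟨0, by omega⟩)) ∧
        (∀ i : Fin r, 2 ≤ (i : ℕ) → N (b (Sum.inl i)) = 0) ∧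
        (∀ x : Fin r ⊕ Fin c, N (b (Sum.inr x)) = 0) := by
  classical
  -- basic identities
  have hNN0 : ∀ x, N (N x) = 0 := by
    intro x
    have := LinearMap.ext_iff.1 hN2 x
    rwa [pow_two] at this
  have hskew : ∀ x y, B (N x) y = - B x (N y) := by
    intro x y; exact eq_neg_of_add_eq_zero_left (hso x y)
  have halt : ∀ x, B (N x) x = 0 := by
    intro x
    have h1 := hso x x
    rw [hBsymm x (N x)] at h1
    linear_combination h1 / 2
  have hNrange : ∀ x y, B (N x) (N y) = 0 := by
    intro x y; rw [hskew, hNN0, map_zero, neg_zero]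
  -- pick u1 with N u1 ≠ 0
  obtain ⟨u1, hu1⟩ : ∃ u, N u ≠ 0 := by
    by_contra h
    push_neg at h
    exact hN0 (LinearMap.ext fun x => h x)
  obtain ⟨y0, hy0⟩ : ∃ y, B (N u1) y ≠ 0 := by
    by_contra h
    push_neg at h
    exact hu1 (hBnd.1 _ h)
  set u2 : V := (B (N u1) y0)⁻¹ • y0 with hu2def
  have h12 : B (N u1) u2 = 1 := by
    rw [hu2def, map_smul, smul_eq_mul, inv_mul_cancel₀ hy0]
  set p : V := N u1 with hp
  set q : V := N u2 with hq
  -- scalar facts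
  have hpu2 : B p u2 = 1 := h12
  have hu2p : B u2 p = 1 := by rw [hBsymm]; exact hpu2
  have hu1q : B u1 q = -1 := by
    have := hso u1 u2; rw [← hp, ← hq] at this; linear_combination this - hpu2
  have hqu1 : B q u1 = -1 := by rw [hBsymm]; exact hu1q
  have hpu1 : B p u1 = 0 := halt u1
  have hu1p : B u1 p = 0 := by rw [hBsymm]; exact hpu1
  have hqu2 : B q u2 = 0 := halt u2
  have hu2q : B u2 q = 0 := by rw [hBsymm]; exact hqu2
  have hpq : B p q = 0 := hNrange u1 u2
  have hqp : B q p = 0 := by rw [hBsymm]; exact hpq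
  have hpp : B p p = 0 := hNrange u1 u1
  have hqq : B q q = 0 := hNrange u2 u2
  have hNp : N p = 0 := hNN0 u1
  have hNq : N q = 0 := hNN0 u2
  -- adjusted vectors
  set e1 : V := u1 + (B u1 u1 / 2) • q with he1
  set e2 : V := u2 + (- B u2 u2 / 2) • p + (B u1 u2) • q with he2
  have hNe1 : N e1 = p := by rw [he1]; simp [hNq, hp]
  have hNe2 : N e2 = q := by rw [he2]; simp [hNp, hNq, hq, hNN0]
  have hBe1e1 : B e1 e1 = 0 := by
    rw [he1]
    simp only [map_add, map_smul, LinearMap.add_apply, LinearMap.smul_apply, smul_eq_mul,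
      hu1q, hqq, hqu1]
    ring
  have hBe2e2 : B e2 e2 = 0 := by
    rw [he2]
    simp only [map_add, map_smul, LinearMap.add_apply, LinearMap.smul_apply, smul_eq_mul,
      hu2p, hu2q, hpu2, hqu2, hpp, hqq, hpq, hqp]
    ring
  have hBe1e2 : B e1 e2 = 0 := by
    rw [he1, he2]
    simp only [map_add, map_smul, LinearMap.add_apply, LinearMap.smul_apply, smul_eq_mul,
      hu1p, hu1q, hqu2, hqp, hqq]
    ring
  have hBe2e1 : B e2 e1 = 0 := by rw [hBsymm]; exact hBe1e2
  have hBe1q : B e1 q = -1 := by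
    rw [he1]; simp only [map_add, map_smul, LinearMap.add_apply, LinearMap.smul_apply,
      smul_eq_mul, hu1q, hqq]; ring
  have hBe1p : B e1 p = 0 := by
    rw [he1]; simp only [map_add, map_smul, LinearMap.add_apply, LinearMap.smul_apply,
      smul_eq_mul, hu1p, hqp]; ring
  have hBe2p : B e2 p = 1 := by
    rw [he2]; simp only [map_add, map_smul, LinearMap.add_apply, LinearMap.smul_apply,
      smul_eq_mul, hu2p, hpp, hqp]; ring
  have hBe2q : B e2 q = 0 := by
    rw [he2]; simp only [map_add, map_smul, LinearMap.add_apply, LinearMap.smul_apply,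
      smul_eq_mul, hu2q, hpq, hqq]; ring
  -- the 4-dimensional subspace U
  set vU : Fin 4 → V := ![e1, e2, -q, p] with hvU
  set dU : Fin 4 → Fin 4 := ![2, 3, 0, 1] with hdU
  have hGramU : ∀ i j, B (vU i) (vU (dU j)) = if i = j then 1 else 0 := by
    intro i j
    fin_cases i <;> fin_cases j <;>
      simp [hvU, hdU, hBe1e1, hBe1e2, hBe2e1, hBe2e2, hBe1q, hBe1p, hBe2q, hBe2p,
        hqq, hqp, hpq, hpp, hqu1, hpu1, hBsymm p e2, hBsymm q e2, hBsymm p e1, hBsymm q e1,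
        hBe2p, hBe2q]
  have hliU : LinearIndependent K vU := linIndep_of_dual_pairing B vU dU hGramU
  set U : Submodule K V := Submodule.span K (Set.range vU) with hU
  have hUfr : finrank K U = 4 := by
    rw [hU, finrank_span_eq_card hliU]; simp
  have hUnd : (B.restrict U).Nondegenerate := span_restrict_nondeg B vU dU hGramU
  have hBrefl : B.IsRefl := fun x y h => by rw [hBsymm]; exact h
  have hcompl : IsCompl U (B.orthogonal U) :=
    LinearMap.BilinForm.isCompl_orthogonal_of_restrict_nondegenerate hBrefl hUnd
  set W : Submodule K V := B.orthogonal U with hW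
  have hWfr : 4 + finrank K W = finrank K V := by
    rw [← hUfr]; exact Submodule.finrank_add_eq_of_isCompl hcompl
  -- elements of W are B-orthogonal to U
  have hUW : ∀ u ∈ U, ∀ w ∈ W, B u w = 0 := by
    intro u hu w hw
    exact hw u hu
  have hWU : ∀ w ∈ W, ∀ u ∈ U, B w u = 0 := fun w hw u hu => hBrefl _ _ (hUW u hu w hw)
  -- B restricted to W is nondegenerate
  have hWnd : (B.restrict W).Nondegenerate := by
    refine (LinearMap.IsRefl.nondegenerate_iff_separatingLeft (B := B.restrict W)
      (fun x y h => hBrefl _ _ h)).2 ?_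
    intro x hx
    refine Subtype.ext (hBnd.1 _ fun y => ?_)
    obtain ⟨u, hu, w, hw, rfl⟩ := Submodule.mem_sup.1
      (hcompl.sup_eq_top ▸ Submodule.mem_top : y ∈ U ⊔ W)
    rw [map_add, hWU _ x.2 u hu, zero_add]; simpa using hx ⟨w, hw⟩
  -- members of U
  have he1U : e1 ∈ U := Submodule.subset_span ⟨0, rfl⟩
  have he2U : e2 ∈ U := Submodule.subset_span ⟨1, rfl⟩
  have hmqU : -q ∈ U := Submodule.subset_span ⟨2, rfl⟩
  have hpU : p ∈ U := Submodule.subset_span ⟨3, rfl⟩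
  have hqU : q ∈ U := by simpa using neg_mem hmqU
  -- range of N is contained in U
  have hNU : ∀ x, N x ∈ U := by
    intro x
    have hliPQ : LinearIndependent K ![p, q] := by
      rw [LinearIndependent.pair_iff]
      intro a b hab
      have h1 : B (a • p + b • q) u2 = 0 := by rw [hab, map_zero, LinearMap.zero_apply]
      have h2 : B (a • p + b • q) u1 = 0 := by rw [hab, map_zero, LinearMap.zero_apply]
      simp only [map_add, map_smul, LinearMap.add_apply, LinearMap.smul_apply, smul_eq_mul,
        hpu2, hqu2, hpu1, hqu1] at h1 h2
      constructor
      · linear_combination h1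
      · linear_combination -h2
    have hspan : Submodule.span K (Set.range ![p, q]) = LinearMap.range N := by
      apply Submodule.eq_of_le_of_finrank_le
      · rw [Submodule.span_le]
        rintro z ⟨i, rfl⟩
        fin_cases i
        · exact ⟨u1, rfl⟩
        · exact ⟨u2, rfl⟩
      · rw [hrk, finrank_span_eq_card hliPQ]; simp
    have : N x ∈ LinearMap.range N := ⟨x, rfl⟩
    rw [← hspan] at this
    refine Submodule.span_le.2 ?_ this
    rintro z ⟨i, rfl⟩
    fin_cases i
    · exact hpU
    · exact hqU
  -- N kills W
  have hNW : ∀ w ∈ W, N w = 0 := by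
    intro w hw
    refine hBnd.1 _ fun y => ?_
    rw [hskew]
    rw [hWU w hw (N y) (hNU y), neg_zero]
  -- orthonormal basis of W
  have hWsymm : (B.restrict W).IsSymm := by
    refine ⟨fun x y => ?_⟩
    simpa using hBsymm x y
  set m : ℕ := finrank K W with hmdef
  obtain ⟨bW, hbW⟩ := exists_orthonormal_basis (B.restrict W) hWsymm hWnd
  set wv : Fin m → V := fun k => ((bW k : W) : V) with hwv
  have h_wvW : ∀ k, wv k ∈ W := fun k => (bW k).2
  have h_wv : ∀ (a b : ℕ) (ha : a < m) (hb : b < m),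
      B (wv ⟨a, ha⟩) (wv ⟨b, hb⟩) = if a = b then 1 else 0 := by
    intro a b ha hb
    have := hbW ⟨a, ha⟩ ⟨b, hb⟩
    simp only [LinearMap.BilinForm.restrict_apply] at this
    rw [hwv]
    simpa [Fin.mk.injEq] using this
  have hNwv : ∀ k, N (wv k) = 0 := fun k => hNW _ (h_wvW k)
  have hU_wv : ∀ x ∈ U, ∀ k, B x (wv k) = 0 := fun x hx k => hUW x hx _ (h_wvW k)
  have h_wv_U : ∀ k, ∀ x ∈ U, B (wv k) x = 0 := fun k x hx => hWU _ (h_wvW k) x hx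
  -- numerics
  set s : ℕ := m / 2 with hsdef
  set c : ℕ := m % 2 with hcdef
  have hm2 : m = 2 * s + c := by omega
  have hc1 : c ≤ 1 := by omega
  set r : ℕ := s + 2 with hrdef
  have hr2 : 2 ≤ r := by omega
  have hfrV : finrank K V = 2 * r + c := by omega
  -- square root of -1
  obtain ⟨ι, hι⟩ : ∃ z : K, z ^ 2 = -1 :=
    IsAlgClosed.exists_pow_nat_eq (-1 : K) (n := 2) (by norm_num)
  -- hyperbolic pairs inside W
  set E : Fin s → V := fun j =>
    (2 : K)⁻¹ • wv ⟨2 * j, by have := j.isLt; omega⟩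
      + (ι / 2) • wv ⟨2 * j + 1, by have := j.isLt; omega⟩ with hE
  set E' : Fin s → V := fun j =>
    wv ⟨2 * j, by have := j.isLt; omega⟩
      - ι • wv ⟨2 * j + 1, by have := j.isLt; omega⟩ with hE'
  set F : Fin c → V := fun k => wv ⟨2 * s + k, by have := k.isLt; omega⟩ with hF
  have hEE' : ∀ j k, B (E j) (E' k) = if j = k then 1 else 0 := by
    intro j k
    rw [hE, hE']
    simp only [map_add, map_sub, map_smul, LinearMap.add_apply, LinearMap.sub_apply,
      LinearMap.smul_apply, smul_eq_mul, h_wv]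
    rcases eq_or_ne j k with rfl | hne
    · have h1 : 2 * (j : ℕ) ≠ 2 * (j : ℕ) + 1 := by omega
      have h2 : 2 * (j : ℕ) + 1 ≠ 2 * (j : ℕ) := by omega
      rw [if_pos rfl]
      simp only [if_pos rfl, if_neg h1, if_neg h2, if_true, eq_self_iff_true]
      field_simp
      linear_combination -hι
    · have hjk : (j : ℕ) ≠ (k : ℕ) := fun h => hne (Fin.ext h)
      have h1 : 2 * (j : ℕ) ≠ 2 * (k : ℕ) := by omega
      have h2 : 2 * (j : ℕ) ≠ 2 * (k : ℕ) + 1 := by omega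
      have h3 : 2 * (j : ℕ) + 1 ≠ 2 * (k : ℕ) := by omega
      have h4 : 2 * (j : ℕ) + 1 ≠ 2 * (k : ℕ) + 1 := by omega
      rw [if_neg hne]
      simp only [if_neg h1, if_neg h2, if_neg h3, if_neg h4]
      ring
  have hEE : ∀ j k, B (E j) (E k) = 0 := by
    intro j k
    rw [hE]
    simp only [map_add, map_smul, LinearMap.add_apply, LinearMap.smul_apply, smul_eq_mul, h_wv]
    rcases eq_or_ne j k with rfl | hne
    · have h1 : 2 * (j : ℕ) ≠ 2 * (j : ℕ) + 1 := by omega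
      have h2 : 2 * (j : ℕ) + 1 ≠ 2 * (j : ℕ) := by omega
      simp only [if_pos rfl, if_neg h1, if_neg h2, if_true, eq_self_iff_true]
      field_simp
      linear_combination hι
    · have hjk : (j : ℕ) ≠ (k : ℕ) := fun h => hne (Fin.ext h)
      have h1 : 2 * (j : ℕ) ≠ 2 * (k : ℕ) := by omega
      have h2 : 2 * (j : ℕ) ≠ 2 * (k : ℕ) + 1 := by omega
      have h3 : 2 * (j : ℕ) + 1 ≠ 2 * (k : ℕ) := by omega
      have h4 : 2 * (j : ℕ) + 1 ≠ 2 * (k : ℕ) + 1 := by omega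
      simp only [if_neg h1, if_neg h2, if_neg h3, if_neg h4]
      ring
  have hE'E' : ∀ j k, B (E' j) (E' k) = 0 := by
    intro j k
    rw [hE']
    simp only [map_sub, map_smul, LinearMap.sub_apply, LinearMap.smul_apply, smul_eq_mul, h_wv]
    rcases eq_or_ne j k with rfl | hne
    · have h1 : 2 * (j : ℕ) ≠ 2 * (j : ℕ) + 1 := by omega
      have h2 : 2 * (j : ℕ) + 1 ≠ 2 * (j : ℕ) := by omega
      simp only [if_pos rfl, if_neg h1, if_neg h2, if_true, eq_self_iff_true]
      linear_combination hι
    · have hjk : (j : ℕ) ≠ (k : ℕ) := fun h => hne (Fin.ext h)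
      have h1 : 2 * (j : ℕ) ≠ 2 * (k : ℕ) := by omega
      have h2 : 2 * (j : ℕ) ≠ 2 * (k : ℕ) + 1 := by omega
      have h3 : 2 * (j : ℕ) + 1 ≠ 2 * (k : ℕ) := by omega
      have h4 : 2 * (j : ℕ) + 1 ≠ 2 * (k : ℕ) + 1 := by omega
      simp only [if_neg h1, if_neg h2, if_neg h3, if_neg h4]
      ring
  have hFF : ∀ k l : Fin c, B (F k) (F l) = if k = l then 1 else 0 := by
    intro k l
    rw [hF]
    simp only [h_wv]
    exact if_congr (by rw [Fin.ext_iff]; omega) rfl rfl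
  have hFE : ∀ (k : Fin c) (j : Fin s), B (F k) (E j) = 0 := by
    intro k j
    rw [hF, hE]
    simp only [map_add, map_smul, smul_eq_mul, h_wv]
    have h1 : 2 * s + (k : ℕ) ≠ 2 * (j : ℕ) := by have := j.isLt; omega
    have h2 : 2 * s + (k : ℕ) ≠ 2 * (j : ℕ) + 1 := by have := j.isLt; omega
    simp only [if_neg h1, if_neg h2]
    ring
  have hFE' : ∀ (k : Fin c) (j : Fin s), B (F k) (E' j) = 0 := by
    intro k j
    rw [hF, hE']
    simp only [map_sub, map_smul, smul_eq_mul, h_wv]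
    have h1 : 2 * s + (k : ℕ) ≠ 2 * (j : ℕ) := by have := j.isLt; omega
    have h2 : 2 * s + (k : ℕ) ≠ 2 * (j : ℕ) + 1 := by have := j.isLt; omega
    simp only [if_neg h1, if_neg h2]
    ring
  have hNE : ∀ j, N (E j) = 0 := by
    intro j; rw [hE]; simp [hNwv]
  have hNE' : ∀ j, N (E' j) = 0 := by
    intro j; rw [hE']; simp [hNwv]
  have hNF : ∀ k, N (F k) = 0 := by
    intro k; rw [hF]; simp [hNwv]
  -- mixed U / W pairings
  have hUE : ∀ x ∈ U, ∀ j, B x (E j) = 0 := by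
    intro x hx j; rw [hE]
    simp [map_add, map_smul, hU_wv x hx]
  have hUE' : ∀ x ∈ U, ∀ j, B x (E' j) = 0 := by
    intro x hx j; rw [hE']
    simp [map_sub, map_smul, hU_wv x hx]
  have hUF : ∀ x ∈ U, ∀ k, B x (F k) = 0 := by
    intro x hx k; rw [hF]; exact hU_wv x hx _
  have hEU : ∀ j, ∀ x ∈ U, B (E j) x = 0 := fun j x hx => hBrefl _ _ (hUE x hx j)
  have hE'U : ∀ j, ∀ x ∈ U, B (E' j) x = 0 := fun j x hx => hBrefl _ _ (hUE' x hx j)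
  have hFU : ∀ k, ∀ x ∈ U, B (F k) x = 0 := fun k x hx => hBrefl _ _ (hUF x hx k)
  -- the full family
  set eV : Fin r → V := fun i =>
    if h0 : (i : ℕ) = 0 then e1 else if h1 : (i : ℕ) = 1 then e2
      else E ⟨(i : ℕ) - 2, by have := i.isLt; omega⟩ with heV
  set e'V : Fin r → V := fun i =>
    if h0 : (i : ℕ) = 0 then -q else if h1 : (i : ℕ) = 1 then p
      else E' ⟨(i : ℕ) - 2, by have := i.isLt; omega⟩ with he'V
  -- application lemmas
  have heV0 : ∀ i : Fin r, (i : ℕ) = 0 → eV i = e1 := by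
    intro i h; rw [heV]; simp [h]
  have heV1 : ∀ i : Fin r, (i : ℕ) = 1 → eV i = e2 := by
    intro i h; rw [heV]; simp [h]
  have heV2 : ∀ (i : Fin r) (h : 2 ≤ (i : ℕ)),
      eV i = E ⟨(i : ℕ) - 2, by have := i.isLt; omega⟩ := by
    intro i h; rw [heV]
    simp only [dif_neg (by omega : ¬ (i : ℕ) = 0), dif_neg (by omega : ¬ (i : ℕ) = 1)]
  have he'V0 : ∀ i : Fin r, (i : ℕ) = 0 → e'V i = -q := by
    intro i h; rw [he'V]; simp [h]
  have he'V1 : ∀ i : Fin r, (i : ℕ) = 1 → e'V i = p := by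
    intro i h; rw [he'V]; simp [h]
  have he'V2 : ∀ (i : Fin r) (h : 2 ≤ (i : ℕ)),
      e'V i = E' ⟨(i : ℕ) - 2, by have := i.isLt; omega⟩ := by
    intro i h; rw [he'V]
    simp only [dif_neg (by omega : ¬ (i : ℕ) = 0), dif_neg (by omega : ¬ (i : ℕ) = 1)]
  have heVU : ∀ i : Fin r, (i : ℕ) < 2 → eV i ∈ U := by
    intro i h
    rcases (by omega : (i : ℕ) = 0 ∨ (i : ℕ) = 1) with h' | h'
    · rw [heV0 i h']; exact he1U
    · rw [heV1 i h']; exact he2U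
  have he'VU : ∀ i : Fin r, (i : ℕ) < 2 → e'V i ∈ U := by
    intro i h
    rcases (by omega : (i : ℕ) = 0 ∨ (i : ℕ) = 1) with h' | h'
    · rw [he'V0 i h']; exact hmqU
    · rw [he'V1 i h']; exact hpU
  -- Gram relations of the full family
  have g1 : ∀ i j : Fin r, B (eV i) (e'V j) = if i = j then 1 else 0 := by
    intro i j
    rcases Nat.lt_or_ge (i : ℕ) 2 with hi | hi
    · rcases Nat.lt_or_ge (j : ℕ) 2 with hj | hj
      · rcases (by omega : (i : ℕ) = 0 ∨ (i : ℕ) = 1) with hi' | hi' <;>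
          rcases (by omega : (j : ℕ) = 0 ∨ (j : ℕ) = 1) with hj' | hj'
        · rw [heV0 i hi', he'V0 j hj']
          rw [if_pos (Fin.ext (by omega))]
          simp [hBe1q]
        · rw [heV0 i hi', he'V1 j hj']
          rw [if_neg (fun h => by exact absurd (congrArg Fin.val h) (by omega))]
          exact hBe1p
        · rw [heV1 i hi', he'V0 j hj']
          rw [if_neg (fun h => by exact absurd (congrArg Fin.val h) (by omega))]
          simp [hBe2q]
        · rw [heV1 i hi', he'V1 j hj']
          rw [if_pos (Fin.ext (by omega))]
          exact hBe2p
      · rw [he'V2 j hj, if_neg (fun h => by exact absurd (congrArg Fin.val h) (by omega))]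
        exact hUE' _ (heVU i hi) _
    · rcases Nat.lt_or_ge (j : ℕ) 2 with hj | hj
      · rw [heV2 i hi, if_neg (fun h => by exact absurd (congrArg Fin.val h) (by omega))]
        exact hEU _ _ (he'VU j hj)
      · rw [heV2 i hi, he'V2 j hj, hEE']
        exact if_congr (by rw [Fin.ext_iff, Fin.ext_iff]; simp; omega) rfl rfl
  have g2 : ∀ i j : Fin r, B (eV i) (eV j) = 0 := by
    intro i j
    rcases Nat.lt_or_ge (i : ℕ) 2 with hi | hi
    · rcases Nat.lt_or_ge (j : ℕ) 2 with hj | hj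
      · rcases (by omega : (i : ℕ) = 0 ∨ (i : ℕ) = 1) with hi' | hi' <;>
          rcases (by omega : (j : ℕ) = 0 ∨ (j : ℕ) = 1) with hj' | hj'
        · rw [heV0 i hi', heV0 j hj']; exact hBe1e1
        · rw [heV0 i hi', heV1 j hj']; exact hBe1e2
        · rw [heV1 i hi', heV0 j hj']; exact hBe2e1
        · rw [heV1 i hi', heV1 j hj']; exact hBe2e2
      · rw [heV2 j hj]; exact hUE _ (heVU i hi) _
    · rcases Nat.lt_or_ge (j : ℕ) 2 with hj | hj
      · rw [heV2 i hi]; exact hEU _ _ (heVU j hj)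
      · rw [heV2 i hi, heV2 j hj]; exact hEE _ _
  have g3 : ∀ i j : Fin r, B (e'V i) (e'V j) = 0 := by
    intro i j
    rcases Nat.lt_or_ge (i : ℕ) 2 with hi | hi
    · rcases Nat.lt_or_ge (j : ℕ) 2 with hj | hj
      · rcases (by omega : (i : ℕ) = 0 ∨ (i : ℕ) = 1) with hi' | hi' <;>
          rcases (by omega : (j : ℕ) = 0 ∨ (j : ℕ) = 1) with hj' | hj'
        · rw [he'V0 i hi', he'V0 j hj']; simp [hqq]
        · rw [he'V0 i hi', he'V1 j hj']; simp [hqp]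
        · rw [he'V1 i hi', he'V0 j hj']; simp [hpq]
        · rw [he'V1 i hi', he'V1 j hj']; exact hpp
      · rw [he'V2 j hj]; exact hUE' _ (he'VU i hi) _
    · rcases Nat.lt_or_ge (j : ℕ) 2 with hj | hj
      · rw [he'V2 i hi]; exact hE'U _ _ (he'VU j hj)
      · rw [he'V2 i hi, he'V2 j hj]; exact hE'E' _ _
  have g1' : ∀ i j : Fin r, B (e'V i) (eV j) = if i = j then 1 else 0 := by
    intro i j
    rw [hBsymm, g1]
    exact if_congr ⟨fun h => h.symm, fun h => h.symm⟩ rfl rfl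
  have g5 : ∀ (k : Fin c) (i : Fin r), B (F k) (eV i) = 0 := by
    intro k i
    rcases Nat.lt_or_ge (i : ℕ) 2 with hi | hi
    · exact hFU _ _ (heVU i hi)
    · rw [heV2 i hi]; exact hFE _ _
  have g6 : ∀ (k : Fin c) (i : Fin r), B (F k) (e'V i) = 0 := by
    intro k i
    rcases Nat.lt_or_ge (i : ℕ) 2 with hi | hi
    · exact hFU _ _ (he'VU i hi)
    · rw [he'V2 i hi]; exact hFE' _ _
  have g5' : ∀ (k : Fin c) (i : Fin r), B (eV i) (F k) = 0 := by
    intro k i; rw [hBsymm]; exact g5 k i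
  have g6' : ∀ (k : Fin c) (i : Fin r), B (e'V i) (F k) = 0 := by
    intro k i; rw [hBsymm]; exact g6 k i
  -- assemble the family
  set v : Fin r ⊕ Fin r ⊕ Fin c → V :=
    Sum.elim eV (Sum.elim e'V F) with hv
  set d : (Fin r ⊕ Fin r ⊕ Fin c) → (Fin r ⊕ Fin r ⊕ Fin c) :=
    Sum.elim (fun i => Sum.inr (Sum.inl i))
      (Sum.elim (fun i => Sum.inl i) (fun k => Sum.inr (Sum.inr k))) with hd
  have hGram : ∀ t t', B (v t) (v (d t')) = if t = t' then 1 else 0 := by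
    rintro (i | i | k) (j | j | l) <;>
      simp only [hv, hd, Sum.elim_inl, Sum.elim_inr, g1, g1', g2, g3, g5, g6, g5', g6', hFF,
        Sum.inl.injEq, Sum.inr.injEq] <;>
      simp
  have hli : LinearIndependent K v := linIndep_of_dual_pairing B v d hGram
  have hcard : Fintype.card (Fin r ⊕ Fin r ⊕ Fin c) = finrank K V := by
    simp [Fintype.card_sum]; omega
  have hNe : Nonempty (Fin r ⊕ Fin r ⊕ Fin c) := ⟨Sum.inl ⟨0, by omega⟩⟩
  set b : Basis (Fin r ⊕ Fin r ⊕ Fin c) K V :=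
    basisOfLinearIndependentOfCardEqFinrank hli hcard with hb
  have hbv : ⇑b = v := coe_basisOfLinearIndependentOfCardEqFinrank hli hcard
  refine ⟨r, c, hr2, hc1, hfrV, b, ?_, ?_, ?_, ?_, ?_, ?_, ?_, ?_, ?_, ?_⟩
  · intro i j; rw [hbv]; exact g1 i j
  · intro i j; rw [hbv]; exact g2 i j
  · intro i j; rw [hbv]; exact g3 i j
  · intro k; rw [hbv]; simpa [hv] using hFF k k
  · intro k i; rw [hbv]; exact g5 k i
  · intro k i; rw [hbv]; exact g6 k i
  · rw [hbv]
    simp only [hv, Sum.elim_inl, Sum.elim_inr]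
    rw [heV0 _ rfl, he'V1 _ rfl]
    exact hNe1
  · rw [hbv]
    simp only [hv, Sum.elim_inl, Sum.elim_inr]
    rw [heV1 _ rfl, he'V0 _ rfl]
    rw [hNe2]; simp
  · intro i hi
    rw [hbv]
    simp only [hv, Sum.elim_inl]
    rw [heV2 i hi]
    exact hNE _
  · rintro (i | k) <;> rw [hbv] <;> simp only [hv, Sum.elim_inl, Sum.elim_inr]
    · rcases Nat.lt_or_ge (i : ℕ) 2 with hi | hi
      · rcases (by omega : (i : ℕ) = 0 ∨ (i : ℕ) = 1) with hi' | hi'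
        · rw [he'V0 i hi']; simp [hNq]
        · rw [he'V1 i hi']; exact hNp
      · rw [he'V2 i hi]; exact hNE' _
    · exact hNF k
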